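/- The degenerate quadruple S₃,₄ = (ℂ²; span(e₁), span(e₂), span(e₁+e₂), span(e₁+e₂)) can be unitarized with character (a₀; a₁,a₂,a₃,a₄) (all aᵢ > 0) if a₁ + a₂ > a₃ + a₄, a₁ < a₂ + a₃ + a₄, a₂ < a₁ + a₃ + a₄, and 2a₀ = a₁ + a₂ + a₃ + a₄. -/

import Mathlib

def pj (c0 c1 v0 v1 : ℂ) : (Fin 2 → ℂ) →ₗ[ℂ] (Fin 2 → ℂ) where
  toFun x := (c0 * x 0 + c1 * x 1) • ![v0, v1]
  map_add' x y := by
    simp only [Pi.add_apply]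
    rw [← add_smul]; ring_nf
  map_smul' c x := by
    simp only [Pi.smul_apply, smul_eq_mul, RingHom.id_apply, smul_smul]
    ring_nf

@[simp] lemma pj_apply (c0 c1 v0 v1 : ℂ) (x : Fin 2 → ℂ) :
    pj c0 c1 v0 v1 x = (c0 * x 0 + c1 * x 1) • ![v0, v1] := rfl


/-- The system of subspaces `Vs` of the complex vector space `V` can be
unitarized with character `(a₀; a)`: there is a (positive definite hermitian)
inner product `B` on `V` such that the `B`-orthogonal projections `P i` onto
the subspaces `Vs i` satisfy `∑ i, a i • P i = a₀ • I`. -/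
def Unitarizable {V : Type*} [AddCommGroup V] [Module ℂ V] {n : ℕ}
    (Vs : Fin n → Submodule ℂ V) (a₀ : ℝ) (a : Fin n → ℝ) : Prop :=
  ∃ (B : V → V → ℂ) (P : Fin n → V →ₗ[ℂ] V),
    (∀ x y z, B (x + y) z = B x z + B y z) ∧
    (∀ (c : ℂ) (x y : V), B (c • x) y = (starRingEnd ℂ) c * B x y) ∧
    (∀ x y, B x y = (starRingEnd ℂ) (B y x)) ∧
    (∀ x, x ≠ 0 → 0 < (B x x).re) ∧
    (∀ i, LinearMap.range (P i) = Vs i) ∧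
    (∀ i, P i ∘ₗ P i = P i) ∧
    (∀ i x y, B (P i x) y = B x (P i y)) ∧
    (∑ i, (a i : ℂ) • P i) = (a₀ : ℂ) • LinearMap.id

set_option maxHeartbeats 1600000 in
/-- the degenerate quadruple S₃,₄ can be unitarized with any
character (a₀; a₁,a₂,a₃,a₄), all aᵢ > 0, such that a₁ + a₂ > a₃ + a₄,
a₁ < a₂ + a₃ + a₄, a₂ < a₁ + a₃ + a₄ and 2a₀ = a₁ + a₂ + a₃ + a₄. -/
theorem S34_unitarizable
    (a₀ : ℝ) (a : Fin 4 → ℝ) (ha : ∀ i, 0 < a i)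
    (h12 : a 0 + a 1 > a 2 + a 3)
    (h1 : a 0 < a 1 + a 2 + a 3)
    (h2 : a 1 < a 0 + a 2 + a 3)
    (hsum : 2 * a₀ = a 0 + a 1 + a 2 + a 3) :
    Unitarizable
      (![Submodule.span ℂ {![(1 : ℂ), 0]},
         Submodule.span ℂ {![(0 : ℂ), 1]},
         Submodule.span ℂ {![(1 : ℂ), 1]},
         Submodule.span ℂ {![(1 : ℂ), 1]}] : Fin 4 → Submodule ℂ (Fin 2 → ℂ)) a₀ a := by
  have h3 := ha 2
  have h4 := ha 3
  have hA1 : 0 < a₀ - a 0 := by linarith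
  have hA2 : 0 < a₀ - a 1 := by linarith
  have hU : 0 < a 0 + a 1 - a₀ := by linarith
  have E : ∀ t : ℝ, ∃ u : ℝ, u = t := fun t => ⟨t, rfl⟩
  obtain ⟨pR, hpR⟩ := E (a 0 * (a₀ - a 0))
  obtain ⟨qR, hqR⟩ := E (a 1 * (a₀ - a 1))
  obtain ⟨rR, hrR⟩ := E (-((a₀ - a 0) * (a₀ - a 1)))
  obtain ⟨sR, hsR⟩ := E (pR + qR + 2 * rR)
  have hp : 0 < pR := hpR ▸ mul_pos (ha 0) hA1
  have hq : 0 < qR := hqR ▸ mul_pos (ha 1) hA2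
  have hs : 0 < sR := by
    rw [hsR, hpR, hqR, hrR]; nlinarith [mul_pos hU (show (0:ℝ) < 2*a₀ - a 0 - a 1 by linarith)]
  have hdet : 0 < pR * qR - rR ^ 2 := by
    rw [hpR, hqR, hrR]
    nlinarith [mul_pos (mul_pos hA1 hA2) (mul_pos (show (0:ℝ) < a₀ by linarith) hU)]
  have hpC : (pR : ℂ) ≠ 0 := by exact_mod_cast hp.ne'
  have hqC : (qR : ℂ) ≠ 0 := by exact_mod_cast hq.ne'
  have hsC : (sR : ℂ) ≠ 0 := by exact_mod_cast hs.ne'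
  have hA : (a₀ : ℂ) = (↑(a 0) + ↑(a 1) + ↑(a 2) + ↑(a 3)) / 2 := by
    have hc : ((2 * a₀ : ℝ) : ℂ) = ((a 0 + a 1 + a 2 + a 3 : ℝ) : ℂ) := by norm_cast
    push_cast at hc
    linear_combination hc / 2
  refine ⟨fun x y => (starRingEnd ℂ) (x 0) * ((pR : ℂ) * y 0 + (rR : ℂ) * y 1)
      + (starRingEnd ℂ) (x 1) * ((rR : ℂ) * y 0 + (qR : ℂ) * y 1),
    ![pj 1 ((rR : ℂ)/(pR : ℂ)) 1 0,
      pj ((rR : ℂ)/(qR : ℂ)) 1 0 1,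
      pj (((pR : ℂ)+(rR : ℂ))/(sR : ℂ)) (((qR : ℂ)+(rR : ℂ))/(sR : ℂ)) 1 1,
      pj (((pR : ℂ)+(rR : ℂ))/(sR : ℂ)) (((qR : ℂ)+(rR : ℂ))/(sR : ℂ)) 1 1],
    ?_, ?_, ?_, ?_, ?_, ?_, ?_, ?_⟩
  · intro x y z
    simp only [Pi.add_apply, map_add]
    ring
  · intro c x y
    simp only [Pi.smul_apply, smul_eq_mul, map_mul]
    ring
  · intro x y
    simp only [map_add, map_mul, Complex.conj_conj, Complex.conj_ofReal]
    ring
  · intro x hx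
    have hx01 : x 0 ≠ 0 ∨ x 1 ≠ 0 := by
      by_contra h
      push_neg at h
      exact hx (funext fun i => by fin_cases i <;> simp [h.1, h.2])
    simp only [Complex.add_re, Complex.mul_re, Complex.add_im, Complex.mul_im,
      Complex.conj_re, Complex.conj_im, Complex.ofReal_re, Complex.ofReal_im]
    rcases hx01 with h0 | h0
    · have hn : 0 < (x 0).re ^ 2 + (x 0).im ^ 2 := by
        have := Complex.normSq_pos.2 h0
        simpa [Complex.normSq_apply, sq] using this
      nlinarith [sq_nonneg (qR * (x 1).re + rR * (x 0).re),
        sq_nonneg (qR * (x 1).im + rR * (x 0).im), mul_pos hdet hn, hq, hp,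
        sq_nonneg ((x 1).re), sq_nonneg ((x 1).im)]
    · have hn : 0 < (x 1).re ^ 2 + (x 1).im ^ 2 := by
        have := Complex.normSq_pos.2 h0
        simpa [Complex.normSq_apply, sq] using this
      nlinarith [sq_nonneg (pR * (x 0).re + rR * (x 1).re),
        sq_nonneg (pR * (x 0).im + rR * (x 1).im), mul_pos hdet hn, hq, hp,
        sq_nonneg ((x 0).re), sq_nonneg ((x 0).im)]
  · intro i
    have key : ∀ (c0 c1 v0 v1 : ℂ), c0 * v0 + c1 * v1 = 1 →
        LinearMap.range (pj c0 c1 v0 v1) = Submodule.span ℂ {![v0, v1]} := by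
      intro c0 c1 v0 v1 hc
      refine le_antisymm ?_ ?_
      · rintro y ⟨x, rfl⟩
        rw [pj_apply]
        exact Submodule.smul_mem _ _ (Submodule.mem_span_singleton_self _)
      · rw [Submodule.span_le, Set.singleton_subset_iff]
        exact ⟨![v0, v1], by
          simp only [pj_apply, Matrix.cons_val_zero, Matrix.cons_val_one, Matrix.head_cons, hc,
            one_smul]⟩
    have hc3 : ((pR : ℂ) + (rR : ℂ)) / (sR : ℂ) * 1 + ((qR : ℂ) + (rR : ℂ)) / (sR : ℂ) * 1 = 1 := by
      field_simp
      rw [hsR]; push_cast; ring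
    fin_cases i <;>
      simp only [Matrix.cons_val_zero, Matrix.cons_val_one, Matrix.head_cons,
        Matrix.cons_val_two, Matrix.tail_cons, Matrix.cons_val_three, Fin.isValue]
    · exact key 1 _ 1 0 (by ring)
    · exact key _ 1 0 1 (by ring)
    · exact key _ _ 1 1 hc3
    · exact key _ _ 1 1 hc3
  · intro i
    have key2 : ∀ (c0 c1 v0 v1 : ℂ), c0 * v0 + c1 * v1 = 1 →
        pj c0 c1 v0 v1 ∘ₗ pj c0 c1 v0 v1 = pj c0 c1 v0 v1 := by
      intro c0 c1 v0 v1 hc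
      refine LinearMap.ext fun x => ?_
      simp only [LinearMap.comp_apply, pj_apply, Pi.smul_apply, Matrix.cons_val_zero,
        Matrix.cons_val_one, Matrix.head_cons, smul_eq_mul]
      congr 1
      linear_combination (c0 * x 0 + c1 * x 1) * hc
    have hc3 : ((pR : ℂ) + (rR : ℂ)) / (sR : ℂ) * 1 + ((qR : ℂ) + (rR : ℂ)) / (sR : ℂ) * 1 = 1 := by
      field_simp
      rw [hsR]; push_cast; ring
    fin_cases i <;>
      simp only [Matrix.cons_val_zero, Matrix.cons_val_one, Matrix.head_cons,
        Matrix.cons_val_two, Matrix.tail_cons, Matrix.cons_val_three, Fin.isValue]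
    · exact key2 1 _ 1 0 (by ring)
    · exact key2 _ 1 0 1 (by ring)
    · exact key2 _ _ 1 1 hc3
    · exact key2 _ _ 1 1 hc3
  · have keysym : ∀ (c0 c1 v0 v1 : ℂ), (starRingEnd ℂ) c0 = c0 → (starRingEnd ℂ) c1 = c1 →
        (starRingEnd ℂ) v0 = v0 → (starRingEnd ℂ) v1 = v1 →
        c0 * ((rR : ℂ) * v0 + (qR : ℂ) * v1) = c1 * ((pR : ℂ) * v0 + (rR : ℂ) * v1) →
        ∀ x y : Fin 2 → ℂ,
          (starRingEnd ℂ) (pj c0 c1 v0 v1 x 0) * ((pR : ℂ) * y 0 + (rR : ℂ) * y 1)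
            + (starRingEnd ℂ) (pj c0 c1 v0 v1 x 1) * ((rR : ℂ) * y 0 + (qR : ℂ) * y 1)
          = (starRingEnd ℂ) (x 0)
              * ((pR : ℂ) * pj c0 c1 v0 v1 y 0 + (rR : ℂ) * pj c0 c1 v0 v1 y 1)
            + (starRingEnd ℂ) (x 1)
              * ((rR : ℂ) * pj c0 c1 v0 v1 y 0 + (qR : ℂ) * pj c0 c1 v0 v1 y 1) := by
      intro c0 c1 v0 v1 hc0 hc1 hv0 hv1 hcross x y
      simp only [pj_apply, Pi.smul_apply, Matrix.cons_val_zero, Matrix.cons_val_one,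
        Matrix.head_cons, smul_eq_mul, map_add, map_mul, hc0, hc1, hv0, hv1]
      linear_combination ((starRingEnd ℂ) (x 0) * y 1 - (starRingEnd ℂ) (x 1) * y 0) * hcross
    have hre : ∀ t : ℝ, (starRingEnd ℂ) ((t : ℝ) : ℂ) = ((t : ℝ) : ℂ) := fun t =>
      Complex.conj_ofReal t
    have hdiv : ∀ t u : ℝ, (starRingEnd ℂ) ((t : ℂ) / (u : ℂ)) = (t : ℂ) / (u : ℂ) := by
      intro t u; rw [map_div₀, hre, hre]
    have hdiv2 : ∀ t u w : ℝ,
        (starRingEnd ℂ) (((t : ℂ) + (u : ℂ)) / (w : ℂ)) = ((t : ℂ) + (u : ℂ)) / (w : ℂ) := by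
      intro t u w; rw [map_div₀, map_add, hre, hre, hre]
    have hcr3 : ((pR : ℂ) + (rR : ℂ)) / (sR : ℂ) * ((rR : ℂ) * 1 + (qR : ℂ) * 1)
        = ((qR : ℂ) + (rR : ℂ)) / (sR : ℂ) * ((pR : ℂ) * 1 + (rR : ℂ) * 1) := by
      rw [div_mul_eq_mul_div, div_mul_eq_mul_div]; ring_nf
    intro i x y
    fin_cases i
    · exact keysym 1 _ 1 0 (map_one _) (hdiv rR pR) (map_one _) (map_zero _)
        (by field_simp; ring) x y
    · exact keysym _ 1 0 1 (hdiv rR qR) (map_one _) (map_zero _) (map_one _)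
        (by field_simp; ring) x y
    · exact keysym _ _ 1 1 (hdiv2 pR rR sR) (hdiv2 qR rR sR) (map_one _) (map_one _) hcr3 x y
    · exact keysym _ _ 1 1 (hdiv2 pR rR sR) (hdiv2 qR rR sR) (map_one _) (map_one _) hcr3 x y
  · rw [Fin.sum_univ_four]
    refine LinearMap.ext fun x => funext fun j => ?_
    fin_cases j <;>
      simp only [LinearMap.add_apply, LinearMap.smul_apply, Matrix.cons_val_zero,
        Matrix.cons_val_one, Matrix.head_cons, Matrix.cons_val_two, Matrix.tail_cons,
        Matrix.cons_val_three, pj_apply, LinearMap.id_apply, Pi.add_apply, Pi.smul_apply,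
        smul_eq_mul, Fin.mk_zero, Fin.mk_one, Fin.isValue, Matrix.cons_val_fin_one,
        mul_zero, mul_one, add_zero, zero_add]
    all_goals
      field_simp
      rw [hsR, hpR, hqR, hrR]
      push_cast
      rw [hA]
      ring
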